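/- If λ is a singular cardinal with μ ≤ cf(λ), and X is a topological space that is [μ,ν]-compact for every cardinal ν < λ and [cf(λ),cf(λ)]-compact, then X is [μ,λ]-compact. -/

import Mathlib

open Cardinal

/-- `X` is `[μ,λ]`-compact: every open cover by at most `lam` sets
has a subcover by fewer than `μ` sets. -/
def CptIn (μ lam : Cardinal) (X : Type) [TopologicalSpace X] : Prop :=
  ∀ 𝒰 : Set (Set X), (∀ U ∈ 𝒰, IsOpen U) → #𝒰 ≤ lam → ⋃₀ 𝒰 = Set.univ →
    ∃ 𝒱 ⊆ 𝒰, #𝒱 < μ ∧ ⋃₀ 𝒱 = Set.univ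

/-- `p` is a `D`-limit point of the sequence `x`. -/
def IsDLimit {I X : Type} [TopologicalSpace X] (D : Ultrafilter I) (x : I → X) (p : X) : Prop :=
  ∀ U : Set X, IsOpen U → p ∈ U → {i | x i ∈ U} ∈ D

/-- `X` is `D`-compact. -/
def DCompact {I : Type} (D : Ultrafilter I) (X : Type) [TopologicalSpace X] : Prop :=
  ∀ x : I → X, ∃ p : X, IsDLimit D x p

/-- `D` is `μ`-complete. -/
def MuComplete {I : Type} (μ : Cardinal) (D : Ultrafilter I) : Prop :=
  ∀ S : Set (Set I), #S < μ → (∀ A ∈ S, A ∈ D) → ⋂₀ S ∈ D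

/-- `D` is `(μ,lam)`-regular: there is a family of `lam`-many members of `D`
every intersection of `μ`-many of which is empty. -/
def RegUF {I : Type} (μ lam : Cardinal) (D : Ultrafilter I) : Prop :=
  ∃ (A : Type) (Z : A → Set I), #A = lam ∧ (∀ a, Z a ∈ D) ∧
    ∀ S : Set A, #S = μ → ⋂ a ∈ S, Z a = ∅

/-- The ordinal space of a cardinal, with the order topology. -/
noncomputable def ordSpace (c : Cardinal) : Type := c.ord.ToType

noncomputable instance (c : Cardinal) : LinearOrder (ordSpace c) :=
  inferInstanceAs (LinearOrder c.ord.ToType)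
noncomputable instance (c : Cardinal) : TopologicalSpace (ordSpace c) := Preorder.topology _
instance (c : Cardinal) : OrderTopology (ordSpace c) := ⟨rfl⟩

theorem stmt7 {X : Type} [TopologicalSpace X] (μ lam : Cardinal)
    (hμ : ℵ₀ ≤ μ) (hsing : lam.ord.cof < lam) (hcf : μ ≤ lam.ord.cof)
    (h1 : ∀ ν : Cardinal, ν < lam → CptIn μ ν X)
    (h2 : CptIn (lam.ord.cof) (lam.ord.cof) X) :
    CptIn μ lam X := by
  intro 𝒰 hopen hcard hcov
  rcases lt_or_eq_of_le hcard with hlt | heq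
  · exact h1 _ hlt 𝒰 hopen le_rfl hcov
  · have hinf : ℵ₀ ≤ lam := hμ.trans (hcf.trans hsing.le)
    obtain ⟨e⟩ : Nonempty (lam.ord.ToType ≃ ↥𝒰) := by
      rw [← Cardinal.eq, Cardinal.mk_toType, Cardinal.card_ord, heq]
    set f : lam.ord.ToType → Set X := fun β => (e β : Set X) with hf
    have hf_mem : ∀ β, f β ∈ 𝒰 := fun β => (e β).2
    have hf_open : ∀ β, IsOpen (f β) := fun β => hopen _ (hf_mem β)
    -- cardinality of initial segments
    have hIic : ∀ b : lam.ord.ToType, #(Set.Iic b) < lam := by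
      intro b
      have h1' : #(Set.Iio b) < lam := Cardinal.mk_Iio_ord_toType b
      have : #(Set.Iic b) ≤ #(Set.Iio b) + 1 := by
        rw [← Set.Iio_union_right]
        exact (Cardinal.mk_union_le _ _).trans (by simp)
      exact this.trans_lt (Cardinal.add_lt_of_lt hinf h1' (lt_of_lt_of_le Cardinal.one_lt_aleph0 hinf))
    -- cofinal set
    obtain ⟨S, hSunb, hScard⟩ := Order.exists_cof_eq (α := lam.ord.ToType)
    rw [Ordinal.cof_toType] at hScard
    set V : lam.ord.ToType → Set X := fun s => ⋃ β ∈ Set.Iic s, f β with hV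
    have hVopen : ∀ s, IsOpen (V s) := fun s => isOpen_biUnion fun β _ => hf_open β
    -- apply h2 to the cover by the V s, s ∈ S
    have hWcov : ⋃₀ (V '' S) = Set.univ := by
      apply Set.eq_univ_of_forall
      intro x
      have hx : x ∈ ⋃₀ 𝒰 := by rw [hcov]; trivial
      obtain ⟨U, hU, hxU⟩ := hx
      obtain ⟨s, hsS, hs⟩ := hSunb (e.symm ⟨U, hU⟩)
      refine ⟨V s, ⟨s, hsS, rfl⟩, ?_⟩
      refine Set.mem_biUnion (show e.symm ⟨U, hU⟩ ≤ s from hs) ?_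
      show x ∈ f (e.symm ⟨U, hU⟩)
      simp only [hf, Equiv.apply_symm_apply]
      exact hxU
    obtain ⟨𝒱, h𝒱sub, h𝒱card, h𝒱cov⟩ :=
      h2 (V '' S) (by rintro W ⟨s, _, rfl⟩; exact hVopen s)
        ((Cardinal.mk_image_le).trans_eq hScard) hWcov
    -- choose indices
    have hch : ∀ W : ↥𝒱, ∃ s, V s = (W : Set X) := by
      rintro ⟨W, hW⟩
      obtain ⟨s, _, rfl⟩ := h𝒱sub hW
      exact ⟨s, rfl⟩
    choose g hg using hch
    set A : Set lam.ord.ToType := ⋃ W : ↥𝒱, Set.Iic (g W) with hA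
    have hAcard : #A < lam := by
      have h1' : #A ≤ #(↥𝒱) * ⨆ W : ↥𝒱, #(Set.Iic (g W)) := Cardinal.mk_iUnion_le _
      rcases isEmpty_or_nonempty (↥𝒱) with hE | hNE
      · have : #A = 0 := by
          rw [hA]
          simp [Set.iUnion_of_empty]
        rw [this]
        exact lt_of_lt_of_le (by simpa using Cardinal.aleph0_pos) hinf
      · have hsup : (⨆ W : ↥𝒱, #(Set.Iic (g W))) < lam :=
          Ordinal.iSup_lt h𝒱card (fun W => hIic (g W))
        refine h1'.trans_lt (Cardinal.mul_lt_of_lt hinf (h𝒱card.trans_le ?_) hsup)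
        exact (Ordinal.cof_ord_le lam).trans le_rfl
    -- the refined cover
    have h𝒰'sub : f '' A ⊆ 𝒰 := by rintro U ⟨β, _, rfl⟩; exact hf_mem β
    have h𝒰'cov : ⋃₀ (f '' A) = Set.univ := by
      apply Set.eq_univ_of_forall
      intro x
      have hx : x ∈ ⋃₀ 𝒱 := by rw [h𝒱cov]; trivial
      obtain ⟨W, hW, hxW⟩ := hx
      have : x ∈ V (g ⟨W, hW⟩) := by rw [hg ⟨W, hW⟩]; exact hxW
      obtain ⟨β, hβ, hxβ⟩ := Set.mem_iUnion₂.mp this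
      exact ⟨f β, ⟨β, Set.mem_iUnion.mpr ⟨⟨W, hW⟩, hβ⟩, rfl⟩, hxβ⟩
    obtain ⟨𝒱', h𝒱'sub, h𝒱'card, h𝒱'cov⟩ :=
      h1 #(f '' A) (Cardinal.mk_image_le.trans_lt hAcard) (f '' A)
        (fun U hU => hopen U (h𝒰'sub hU)) le_rfl h𝒰'cov
    exact ⟨𝒱', h𝒱'sub.trans h𝒰'sub, h𝒱'card, h𝒱'cov⟩
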